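/- Let D and C be C-linear abelian categories such that D has enough projectives, let D~ ⊆ D be an additive full subcategory containing all projective objects of D, and let G : D~ → C be a C-linear functor such that for every object X of D~ there is a right exact sequence Q_X → P_X → X → 0 with Q_X, P_X projective in D, for which (G(X), G(p_X)) is a cokernel of G(q_X) in C. Then there exists a right exact C-linear functor F : D → C with F restricted to D~ naturally isomorphic to G, and F is unique up to natural isomorphism among right exact C-linear functors with this property. -/

import Mathlib

open CategoryTheory CategoryTheory.Limits

universe v₁ v₂ u₁ u₂

/-- A pair of composable morphisms `f : X ⟶ Y`, `g : Y ⟶ Z` forms a right exact sequence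
`X ⟶ Y ⟶ Z ⟶ 0`. -/
def RightExactSeq {C : Type u₁} [Category.{v₁} C] [Abelian C] {X Y Z : C}
    (f : X ⟶ Y) (g : Y ⟶ Z) : Prop :=
  ∃ w : f ≫ g = 0, Epi g ∧ (ShortComplex.mk f g w).Exact

/-- A functor between abelian categories is right exact if it preserves right exact
sequences. -/
def IsRightExactFunctor {C : Type u₁} [Category.{v₁} C] [Abelian C]
    {D : Type u₂} [Category.{v₂} D] [Abelian D] (F : C ⥤ D) : Prop :=
  ∀ ⦃X Y Z : C⦄ (f : X ⟶ Y) (g : Y ⟶ Z),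
    RightExactSeq f g → RightExactSeq (F.map f) (F.map g)

/-- A functor is additive (as a property). -/
def IsAdditiveFunctor {C : Type u₁} [Category.{v₁} C] [Preadditive C]
    {D : Type u₂} [Category.{v₂} D] [Preadditive D] (F : C ⥤ D) : Prop :=
  ∀ ⦃X Y : C⦄ (f g : X ⟶ Y), F.map (f + g) = F.map f + F.map g

/-- A functor is `ℂ`-linear (as a property). -/
def IsCLinearFunctor {C : Type u₁} [Category.{v₁} C] [Preadditive C] [Linear ℂ C]
    {D : Type u₂} [Category.{v₂} D] [Preadditive D] [Linear ℂ D] (F : C ⥤ D) : Prop :=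
  ∀ ⦃X Y : C⦄ (c : ℂ) (f : X ⟶ Y), F.map (c • f) = c • F.map f

set_option linter.unusedSectionVars false
set_option maxHeartbeats 1000000


lemma map_zero_of_additive {A : Type u₁} [Category.{v₁} A] [Preadditive A]
    {B : Type u₂} [Category.{v₂} B] [Preadditive B] (F : A ⥤ B)
    (h : IsAdditiveFunctor F) {X Y : A} : F.map (0 : X ⟶ Y) = 0 := by
  have := h (0 : X ⟶ Y) 0
  rw [add_zero] at this
  exact left_eq_add.mp this

namespace Stmt8Aux
noncomputable section
variable {D : Type u₁} [Category.{v₁} D] [Abelian D]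
variable {C : Type u₂} [Category.{v₂} C] [Abelian C]
variable [EnoughProjectives D]
variable (S : D → Prop) (hproj : ∀ X : D, Projective X → S X)
variable (G : ObjectProperty.FullSubcategory S ⥤ C)

/-- `G.map` of a morphism in `D` between objects of the subcategory. -/
def Gm {A B : D} (hA : S A) (hB : S B) (f : A ⟶ B) :
    G.obj ⟨A, hA⟩ ⟶ G.obj ⟨B, hB⟩ :=
  G.map (show (⟨A, hA⟩ : ObjectProperty.FullSubcategory S) ⟶ ⟨B, hB⟩ from ObjectProperty.homMk f)

lemma Gm_comp {A B E : D} (hA : S A) (hB : S B) (hE : S E) (f : A ⟶ B) (g : B ⟶ E) :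
    Gm S G hA hE (f ≫ g) = Gm S G hA hB f ≫ Gm S G hB hE g :=
  G.map_comp (show (⟨A, hA⟩ : ObjectProperty.FullSubcategory S) ⟶ ⟨B, hB⟩ from ObjectProperty.homMk f)
    (show (⟨B, hB⟩ : ObjectProperty.FullSubcategory S) ⟶ ⟨E, hE⟩ from ObjectProperty.homMk g)

lemma Gm_id {A : D} (hA : S A) : Gm S G hA hA (𝟙 A) = 𝟙 (G.obj ⟨A, hA⟩) :=
  G.map_id _

lemma Gm_add (hGadd : IsAdditiveFunctor G) {A B : D} (hA : S A) (hB : S B) (f g : A ⟶ B) :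
    Gm S G hA hB (f + g) = Gm S G hA hB f + Gm S G hA hB g :=
  hGadd (show (⟨A, hA⟩ : ObjectProperty.FullSubcategory S) ⟶ ⟨B, hB⟩ from ObjectProperty.homMk f)
    (show (⟨A, hA⟩ : ObjectProperty.FullSubcategory S) ⟶ ⟨B, hB⟩ from ObjectProperty.homMk g)

lemma Gm_zero (hGadd : IsAdditiveFunctor G) {A B : D} (hA : S A) (hB : S B) :
    Gm S G hA hB 0 = 0 := by
  have := Gm_add S G hGadd hA hB 0 0
  rw [add_zero] at this
  exact (left_eq_add.mp this)

lemma Gm_sub (hGadd : IsAdditiveFunctor G) {A B : D} (hA : S A) (hB : S B) (f g : A ⟶ B) :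
    Gm S G hA hB (f - g) = Gm S G hA hB f - Gm S G hA hB g := by
  have := Gm_add S G hGadd hA hB (f - g) g
  rw [sub_add_cancel] at this
  rw [this]; abel

lemma Gm_smul [Linear ℂ D] [Linear ℂ C] (hGlin : IsCLinearFunctor G) {A B : D}
    (hA : S A) (hB : S B) (c : ℂ) (f : A ⟶ B) :
    Gm S G hA hB (c • f) = c • Gm S G hA hB f :=
  hGlin c (show (⟨A, hA⟩ : ObjectProperty.FullSubcategory S) ⟶ ⟨B, hB⟩ from ObjectProperty.homMk f)

/-! ### The chosen projective presentation of each object -/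

include hproj in
lemma hs0 (X : D) : S (Projective.over X) := hproj _ inferInstance
include hproj in
lemma hs1 (X : D) : S (Projective.over (kernel (Projective.π X))) := hproj _ inferInstance

/-- The first differential of the chosen presentation. -/
def dd (X : D) : Projective.over (kernel (Projective.π X)) ⟶ Projective.over X :=
  Projective.π _ ≫ kernel.ι (Projective.π X)

lemma dd_comp_π (X : D) : dd X ≫ Projective.π X = 0 := by
  simp [dd]

/-- Lifting through the chosen presentation. -/
lemma liftL {X A : D} [Projective A] (g : A ⟶ Projective.over X)
    (hg : g ≫ Projective.π X = 0) :
    ∃ h : A ⟶ Projective.over (kernel (Projective.π X)), h ≫ dd X = g := by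
  refine ⟨Projective.factorThru (kernel.lift _ g hg) (Projective.π _), ?_⟩
  rw [dd, ← Category.assoc, Projective.factorThru_comp, kernel.lift_ι]

/-- The presentation is a right exact sequence. -/
lemma presRE (X : D) : RightExactSeq (dd X) (Projective.π X) := by
  refine ⟨dd_comp_π X, inferInstance, ?_⟩
  rw [ShortComplex.exact_iff_epi_kernel_lift]
  have e : kernel.lift (Projective.π X) (dd X) (dd_comp_π X)
      = Projective.π (kernel (Projective.π X)) := by
    rw [← cancel_mono (kernel.ι (Projective.π X)), kernel.lift_ι, dd]
  exact e ▸ inferInstance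

/-- The image of the differential under `G`. -/
def Gd (X : D) := Gm S G (hs1 S hproj X) (hs0 S hproj X) (dd X)

abbrev FO (X : D) : C := cokernel (Gd S hproj G X)

abbrev cp (X : D) : G.obj ⟨Projective.over X, hs0 S hproj X⟩ ⟶ FO S hproj G X :=
  cokernel.π _

variable (hGadd : IsAdditiveFunctor G)

include hGadd in
/-- well-definedness : two maps of presentations agreeing over `Y` induce the same map to
the cokernel. -/
lemma descW {X Y : D} (g g' : Projective.over X ⟶ Projective.over Y)
    (h : g ≫ Projective.π Y = g' ≫ Projective.π Y) :
    Gm S G (hs0 S hproj X) (hs0 S hproj Y) g ≫ cp S hproj G Y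
      = Gm S G (hs0 S hproj X) (hs0 S hproj Y) g' ≫ cp S hproj G Y := by
  obtain ⟨h1, hh1⟩ := liftL (X := Y) (g - g') (by rw [Preadditive.sub_comp, h, sub_self])
  have : Gm S G (hs0 S hproj X) (hs0 S hproj Y) (g - g')
      = Gm S G (hs0 S hproj X) (hs1 S hproj Y) h1 ≫ Gd S hproj G Y := by
    rw [← hh1]; exact Gm_comp S G _ _ _ _ _
  have h2 := Gm_sub S G hGadd (hs0 S hproj X) (hs0 S hproj Y) g g'
  rw [this] at h2
  have h3 : (Gm S G (hs0 S hproj X) (hs0 S hproj Y) g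
      - Gm S G (hs0 S hproj X) (hs0 S hproj Y) g') ≫ cp S hproj G Y = 0 := by
    rw [← h2, Category.assoc, cokernel.condition, Limits.comp_zero]
  rw [Preadditive.sub_comp, sub_eq_zero] at h3
  exact h3

/-- The chosen lift of a morphism to the presentations. -/
def l0 {X Y : D} (f : X ⟶ Y) : Projective.over X ⟶ Projective.over Y :=
  Projective.factorThru (Projective.π X ≫ f) (Projective.π Y)

lemma l0_comm {X Y : D} (f : X ⟶ Y) :
    l0 f ≫ Projective.π Y = Projective.π X ≫ f :=
  Projective.factorThru_comp _ _

lemma FM_cond {X Y : D} (g : Projective.over X ⟶ Projective.over Y)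
    (hg : dd X ≫ g ≫ Projective.π Y = 0) :
    Gd S hproj G X ≫ Gm S G (hs0 S hproj X) (hs0 S hproj Y) g ≫ cp S hproj G Y = 0 := by
  obtain ⟨h1, hh1⟩ := liftL (X := Y) (dd X ≫ g) (by rw [Category.assoc]; exact hg)
  rw [← Category.assoc, show Gd S hproj G X ≫ Gm S G (hs0 S hproj X) (hs0 S hproj Y) g
      = Gm S G (hs1 S hproj X) (hs1 S hproj Y) h1 ≫ Gd S hproj G Y from ?_]
  · rw [Category.assoc, cokernel.condition, Limits.comp_zero]
  · rw [Gd, ← Gm_comp, ← hh1, Gm_comp, Gd]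

/-- The extended functor on morphisms. -/
def FM {X Y : D} (f : X ⟶ Y) : FO S hproj G X ⟶ FO S hproj G Y :=
  cokernel.desc _ (Gm S G (hs0 S hproj X) (hs0 S hproj Y) (l0 f) ≫ cp S hproj G Y)
    (FM_cond S hproj G (l0 f)
      (by rw [l0_comm, ← Category.assoc, dd_comp_π, Limits.zero_comp]))

include hGadd in
lemma cp_FM {X Y : D} (f : X ⟶ Y) (g : Projective.over X ⟶ Projective.over Y)
    (hg : g ≫ Projective.π Y = Projective.π X ≫ f) :
    cp S hproj G X ≫ FM S hproj G f
      = Gm S G (hs0 S hproj X) (hs0 S hproj Y) g ≫ cp S hproj G Y := by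
  rw [FM, cokernel.π_desc]
  exact descW S hproj G hGadd _ _ (by rw [l0_comm, hg])

include hGadd in
lemma FM_id (X : D) : FM S hproj G (𝟙 X) = 𝟙 (FO S hproj G X) := by
  rw [← cancel_epi (cp S hproj G X), Category.comp_id,
    cp_FM S hproj G hGadd (𝟙 X) (𝟙 _) (by rw [Category.id_comp, Category.comp_id]),
    Gm_id, Category.id_comp]

include hGadd in
lemma FM_comp {X Y Z : D} (f : X ⟶ Y) (g : Y ⟶ Z) :
    FM S hproj G (f ≫ g) = FM S hproj G f ≫ FM S hproj G g := by
  rw [← cancel_epi (cp S hproj G X),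
    cp_FM S hproj G hGadd (f ≫ g) (l0 f ≫ l0 g)
      (by rw [Category.assoc, l0_comm, ← Category.assoc, l0_comm, Category.assoc]),
    ← Category.assoc, cp_FM S hproj G hGadd f (l0 f) (l0_comm f), Category.assoc,
    cp_FM S hproj G hGadd g (l0 g) (l0_comm g), Gm_comp S G _ (hs0 S hproj Y) _,
    Category.assoc]

include hGadd in
lemma FM_add {X Y : D} (f g : X ⟶ Y) :
    FM S hproj G (f + g) = FM S hproj G f + FM S hproj G g := by
  rw [← cancel_epi (cp S hproj G X),
    cp_FM S hproj G hGadd (f + g) (l0 f + l0 g)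
      (by rw [Preadditive.add_comp, l0_comm, l0_comm, Preadditive.comp_add]),
    Preadditive.comp_add, cp_FM S hproj G hGadd f (l0 f) (l0_comm f),
    cp_FM S hproj G hGadd g (l0 g) (l0_comm g), Gm_add S G hGadd,
    Preadditive.add_comp]

include hGadd in
lemma FM_zero {X Y : D} : FM S hproj G (0 : X ⟶ Y) = 0 := by
  have := FM_add S hproj G hGadd (0 : X ⟶ Y) 0
  rw [add_zero] at this
  exact left_eq_add.mp this

include hGadd in
lemma FM_smul [Linear ℂ D] [Linear ℂ C] (hGlin : IsCLinearFunctor G) {X Y : D}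
    (c : ℂ) (f : X ⟶ Y) : FM S hproj G (c • f) = c • FM S hproj G f := by
  rw [← cancel_epi (cp S hproj G X),
    cp_FM S hproj G hGadd (c • f) (c • l0 f)
      (by rw [Linear.smul_comp, l0_comm, Linear.comp_smul]),
    Linear.comp_smul, cp_FM S hproj G hGadd f (l0 f) (l0_comm f),
    Gm_smul S G hGlin, Linear.smul_comp]

/-- The extended functor. -/
def Fdef (hGadd : IsAdditiveFunctor G) : D ⥤ C where
  obj X := FO S hproj G X
  map f := FM S hproj G f
  map_id X := FM_id S hproj G hGadd X
  map_comp f g := FM_comp S hproj G hGadd f g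

/-! ### Right exactness -/

include hGadd in
lemma cp_section {Y Z : D} (p : Y ⟶ Z) [Epi p] {T : C} (x : FO S hproj G Z ⟶ T) :
    cp S hproj G Z ≫ x
      = Gm S G (hs0 S hproj Z) (hs0 S hproj Y)
          (Projective.factorThru (Projective.π Z) (Projective.π Y ≫ p))
        ≫ cp S hproj G Y ≫ FM S hproj G p ≫ x := by
  rw [← Category.assoc (cp S hproj G Y), cp_FM S hproj G hGadd p (l0 p) (l0_comm p),
    ← Category.assoc, ← Category.assoc, ← Gm_comp S G _ (hs0 S hproj Y) _]
  have e := descW S hproj G hGadd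
    (Projective.factorThru (Projective.π Z) (Projective.π Y ≫ p) ≫ l0 p) (𝟙 _)
    (by rw [Category.assoc, l0_comm, Projective.factorThru_comp, Category.id_comp])
  rw [e, Gm_id, Category.id_comp]

include hGadd in
lemma FM_epi {Y Z : D} (p : Y ⟶ Z) (hp : Epi p) : Epi (FM S hproj G p) := by
  constructor
  intro T u v huv
  haveI := hp
  rw [← cancel_epi (cp S hproj G Z), cp_section S hproj G hGadd p u,
    cp_section S hproj G hGadd p v, huv]

/-- exactness over `Y` of the combined presentation. -/
lemma pairQ {X Y Z W : D} (q : X ⟶ Y) (p : Y ⟶ Z) (w : q ≫ p = 0)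
    (hex : (ShortComplex.mk q p w).Exact)
    (g : Projective.over W ⟶ Projective.over Y)
    (hg : g ≫ Projective.π Y ≫ p = 0) :
    ∃ (h : Projective.over W ⟶ Projective.over (kernel (Projective.π Y)))
      (u : Projective.over W ⟶ Projective.over X),
      g = h ≫ dd Y + u ≫ l0 q := by
  have hm : (g ≫ Projective.π Y) ≫ p = 0 := by rw [Category.assoc]; exact hg
  obtain ⟨u', hu'⟩ : ∃ u' : Projective.over W ⟶ X, u' ≫ q = g ≫ Projective.π Y :=
    ⟨hex.liftFromProjective (g ≫ Projective.π Y) hm,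
      hex.liftFromProjective_comp (g ≫ Projective.π Y) hm⟩
  set u : Projective.over W ⟶ Projective.over X := Projective.factorThru u' (Projective.π X)
    with hu
  have hdiff : (g - u ≫ l0 q) ≫ Projective.π Y = 0 := by
    rw [Preadditive.sub_comp, Category.assoc, l0_comm, ← Category.assoc, hu,
      Projective.factorThru_comp, hu', sub_self]
  obtain ⟨h, hh⟩ := liftL (X := Y) _ hdiff
  exact ⟨h, u, by rw [hh, sub_add_cancel]⟩

include hGadd in
lemma killt {X Y Z W : D} (q : X ⟶ Y) (p : Y ⟶ Z) (w : q ≫ p = 0)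
    (hex : (ShortComplex.mk q p w).Exact)
    (g : Projective.over W ⟶ Projective.over Y)
    (hg : g ≫ Projective.π Y ≫ p = 0)
    {T : C} (t : FO S hproj G Y ⟶ T) (ht : FM S hproj G q ≫ t = 0) :
    Gm S G (hs0 S hproj W) (hs0 S hproj Y) g ≫ cp S hproj G Y ≫ t = 0 := by
  obtain ⟨h, u, hgu⟩ := pairQ q p w hex g hg
  rw [hgu, Gm_add S G hGadd, Gm_comp S G _ (hs1 S hproj Y) _,
    Gm_comp S G _ (hs0 S hproj X) _, Preadditive.add_comp, Category.assoc, Category.assoc]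
  have e1 : Gd S hproj G Y ≫ cp S hproj G Y ≫ t = 0 := by
    rw [← Category.assoc, cokernel.condition, Limits.zero_comp]
  have e2 : Gm S G (hs0 S hproj X) (hs0 S hproj Y) (l0 q) ≫ cp S hproj G Y ≫ t = 0 := by
    rw [← Category.assoc, ← cp_FM S hproj G hGadd q (l0 q) (l0_comm q), Category.assoc, ht,
      Limits.comp_zero]
  rw [show Gm S G (hs1 S hproj Y) (hs0 S hproj Y) (dd Y) = Gd S hproj G Y from rfl, e1, e2,
    Limits.comp_zero, Limits.comp_zero, add_zero]

include hGadd in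
lemma Fdesc {X Y Z : D} (q : X ⟶ Y) (p : Y ⟶ Z) (w : q ≫ p = 0) (hp : Epi p)
    (hex : (ShortComplex.mk q p w).Exact)
    {T : C} (t : FO S hproj G Y ⟶ T) (ht : FM S hproj G q ≫ t = 0) :
    ∃ s : FO S hproj G Z ⟶ T, FM S hproj G p ≫ s = t := by
  haveI := hp
  set r : Projective.over Z ⟶ Projective.over Y :=
    Projective.factorThru (Projective.π Z) (Projective.π Y ≫ p) with hrdef
  have hr : r ≫ Projective.π Y ≫ p = Projective.π Z := Projective.factorThru_comp _ _
  have cond : Gd S hproj G Z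
      ≫ Gm S G (hs0 S hproj Z) (hs0 S hproj Y) r ≫ cp S hproj G Y ≫ t = 0 := by
    have := killt S hproj G hGadd q p w hex (dd Z ≫ r)
      (by rw [Category.assoc, hr, dd_comp_π]) t ht
    rw [Gm_comp S G _ (hs0 S hproj Z) _] at this
    rw [← Category.assoc, ← Category.assoc]
    rw [← Category.assoc] at this
    exact this
  refine ⟨cokernel.desc _ (Gm S G (hs0 S hproj Z) (hs0 S hproj Y) r ≫ cp S hproj G Y ≫ t)
    cond, ?_⟩
  rw [← cancel_epi (cp S hproj G Y), ← Category.assoc,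
    cp_FM S hproj G hGadd p (l0 p) (l0_comm p), Category.assoc, cokernel.π_desc]
  have hdiff := killt S hproj G hGadd q p w hex (𝟙 _ - l0 p ≫ r)
    (by rw [Preadditive.sub_comp, Category.id_comp, Category.assoc, hr, l0_comm, sub_self])
    t ht
  rw [Gm_sub S G hGadd, Gm_id, Preadditive.sub_comp, Category.id_comp, sub_eq_zero] at hdiff
  rw [← Category.assoc, ← Gm_comp S G _ (hs0 S hproj Z) _]
  exact hdiff.symm

include hGadd in
lemma FM_rexact {X Y Z : D} (q : X ⟶ Y) (p : Y ⟶ Z) (h : RightExactSeq q p) :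
    RightExactSeq (FM S hproj G q) (FM S hproj G p) := by
  obtain ⟨w, hp, hex⟩ := h
  have w' : FM S hproj G q ≫ FM S hproj G p = 0 := by
    rw [← FM_comp S hproj G hGadd, w]
    exact FM_zero S hproj G hGadd
  haveI hFe : Epi (FM S hproj G p) := FM_epi S hproj G hGadd p hp
  refine ⟨w', hFe, ?_⟩
  refine ShortComplex.exact_of_g_is_cokernel _ ?_
  exact CokernelCofork.IsColimit.ofπ' (FM S hproj G p) w'
    (fun k hk => ⟨(Fdesc S hproj G hGadd q p w hp hex k hk).choose,
      (Fdesc S hproj G hGadd q p w hp hex k hk).choose_spec⟩)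

/-! ### The isomorphism on the subcategory -/

/-- The comparison map from the extension to `G` on the subcategory. -/
def phi (hGadd : IsAdditiveFunctor G) (X : ObjectProperty.FullSubcategory S) :
    FO S hproj G X.obj ⟶ G.obj X :=
  cokernel.desc _ (Gm S G (hs0 S hproj X.obj) X.property (Projective.π X.obj))
    (by rw [Gd, ← Gm_comp S G _ (hs0 S hproj X.obj) _, dd_comp_π, Gm_zero S G hGadd])

lemma cp_phi (hGadd : IsAdditiveFunctor G) (X : ObjectProperty.FullSubcategory S) :
    cp S hproj G X.obj ≫ phi S hproj G hGadd X
      = Gm S G (hs0 S hproj X.obj) X.property (Projective.π X.obj) :=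
  cokernel.π_desc _ _ _

include hGadd in
lemma phi_natural {X Y : ObjectProperty.FullSubcategory S} (f : X ⟶ Y) :
    FM (X := X.obj) (Y := Y.obj) S hproj G f.hom ≫ phi S hproj G hGadd Y
      = phi S hproj G hGadd X ≫ G.map f := by
  rw [← cancel_epi (cp S hproj G X.obj), ← Category.assoc,
    cp_FM (X := X.obj) (Y := Y.obj) S hproj G hGadd f.hom
      (l0 (X := X.obj) (Y := Y.obj) f.hom) (l0_comm (X := X.obj) (Y := Y.obj) f.hom),
    Category.assoc, cp_phi S hproj G hGadd Y, ← Category.assoc, cp_phi S hproj G hGadd X,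
    ← Gm_comp S G _ (hs0 S hproj Y.obj) _, l0_comm (X := X.obj) (Y := Y.obj) f.hom]
  exact Gm_comp S G _ X.property _ (Projective.π X.obj) f.hom

include hGadd in
lemma phi_isIso (X : ObjectProperty.FullSubcategory S)
    (hGX : ∃ (Q P : D) (hQ : Projective Q) (hP : Projective P)
      (q : Q ⟶ P) (p : P ⟶ X.obj),
        RightExactSeq q p ∧
        ∃ w : G.map (show (⟨Q, hproj Q hQ⟩ : ObjectProperty.FullSubcategory S) ⟶ ⟨P, hproj P hP⟩ from ObjectProperty.homMk q) ≫
              G.map (show (⟨P, hproj P hP⟩ : ObjectProperty.FullSubcategory S) ⟶ X from ObjectProperty.homMk p) = 0,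
          Nonempty (IsColimit (CokernelCofork.ofπ
            (G.map (show (⟨P, hproj P hP⟩ : ObjectProperty.FullSubcategory S) ⟶ X from ObjectProperty.homMk p)) w))) :
    IsIso (phi S hproj G hGadd X) := by
  obtain ⟨Q, P, hQ, hP, q, p, hre, w, ⟨hc⟩⟩ := hGX
  obtain ⟨w0, hpepi, -⟩ := hre
  haveI := hQ; haveI := hP; haveI := hpepi
  have wG : Gm S G (hproj Q hQ) (hproj P hP) q ≫ Gm S G (hproj P hP) X.property p = 0 := w
  have hcG : IsColimit (CokernelCofork.ofπ (Gm S G (hproj P hP) X.property p) wG) := hc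
  clear hc w
  set a : P ⟶ Projective.over X.obj := Projective.factorThru p (Projective.π X.obj) with ha
  have hac : a ≫ Projective.π X.obj = p := Projective.factorThru_comp _ _
  set b : Projective.over X.obj ⟶ P := Projective.factorThru (Projective.π X.obj) p with hb
  have hbc : b ≫ p = Projective.π X.obj := Projective.factorThru_comp _ _
  have w2 : Gm S G (hproj Q hQ) (hproj P hP) q
      ≫ Gm S G (hproj P hP) (hs0 S hproj X.obj) a ≫ cp S hproj G X.obj = 0 := by
    have hqa : (q ≫ a) ≫ Projective.π X.obj = 0 := by
      rw [Category.assoc, hac, w0]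
    obtain ⟨h1, hh1⟩ := liftL (X := X.obj) (q ≫ a) hqa
    rw [← Category.assoc, ← Gm_comp S G _ (hproj P hP) _,
      ← hh1, Gm_comp S G _ (hs1 S hproj X.obj) _, Category.assoc]
    rw [show Gm S G (hs1 S hproj X.obj) (hs0 S hproj X.obj) (dd X.obj)
        = Gd S hproj G X.obj from rfl, cokernel.condition, Limits.comp_zero]
  set ψ : G.obj X ⟶ FO S hproj G X.obj :=
    hcG.desc (CokernelCofork.ofπ
      (Gm S G (hproj P hP) (hs0 S hproj X.obj) a ≫ cp S hproj G X.obj) w2) with hψ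
  have hfac : Gm S G (hproj P hP) X.property p ≫ ψ
      = Gm S G (hproj P hP) (hs0 S hproj X.obj) a ≫ cp S hproj G X.obj :=
    Cofork.IsColimit.π_desc hcG
  refine ⟨ψ, ?_, ?_⟩
  · rw [← cancel_epi (cp S hproj G X.obj), Category.comp_id, ← Category.assoc,
      cp_phi S hproj G hGadd X]
    have hπ : Gm S G (hs0 S hproj X.obj) X.property (Projective.π X.obj)
        = Gm S G (hs0 S hproj X.obj) (hproj P hP) b
          ≫ Gm S G (hproj P hP) X.property p := by
      rw [← hbc]; exact Gm_comp S G _ (hproj P hP) _ b p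
    rw [hπ, Category.assoc, hfac, ← Category.assoc, ← Gm_comp S G _ (hproj P hP) _]
    have e := descW S hproj G hGadd (b ≫ a) (𝟙 _)
      (by rw [Category.assoc, hac, hbc, Category.id_comp])
    rw [e, Gm_id, Category.id_comp]
  · refine Cofork.IsColimit.hom_ext hcG ?_
    have key : Gm S G (hproj P hP) X.property p ≫ ψ ≫ phi S hproj G hGadd X
        = Gm S G (hproj P hP) X.property p := by
      rw [← Category.assoc, hfac, Category.assoc, cp_phi S hproj G hGadd X,
        ← Gm_comp S G _ (hs0 S hproj X.obj) _, hac]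
    exact key.trans (Category.comp_id _).symm

/-! ### Uniqueness -/

include hGadd in
lemma uniq_iso (F' : D ⥤ C) (hadd' : IsAdditiveFunctor F') (hrex' : IsRightExactFunctor F')
    (e : ObjectProperty.ι S ⋙ F' ≅ G) :
    Nonempty (F' ≅ Fdef S hproj G hGadd) := by
  have hre' : ∀ X : D, RightExactSeq (F'.map (dd X)) (F'.map (Projective.π X)) :=
    fun X => hrex' _ _ (presRE X)
  choose w' hepi hex using hre'
  have c' : ∀ X : D, IsColimit (CokernelCofork.ofπ (F'.map (Projective.π X)) (w' X)) := by
    intro X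
    haveI : Epi ((ShortComplex.mk (F'.map (dd X)) (F'.map (Projective.π X)) (w' X)).g) :=
      hepi X
    exact (hex X).gIsCokernel
  -- naturality of e on the presentation objects
  have enat : ∀ {A B : D} (hA : S A) (hB : S B) (f : A ⟶ B),
      F'.map f ≫ e.hom.app ⟨B, hB⟩ = e.hom.app ⟨A, hA⟩ ≫ Gm S G hA hB f :=
    fun hA hB f => e.hom.naturality (show (⟨_, hA⟩ : ObjectProperty.FullSubcategory S) ⟶ ⟨_, hB⟩ from ObjectProperty.homMk f)
  have enat' : ∀ {A B : D} (hA : S A) (hB : S B) (f : A ⟶ B),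
      Gm S G hA hB f ≫ e.inv.app ⟨B, hB⟩ = e.inv.app ⟨A, hA⟩ ≫ F'.map f :=
    fun hA hB f => e.inv.naturality (show (⟨_, hA⟩ : ObjectProperty.FullSubcategory S) ⟶ ⟨_, hB⟩ from ObjectProperty.homMk f)
  have w2 : ∀ X : D, F'.map (dd X)
      ≫ e.hom.app ⟨Projective.over X, hs0 S hproj X⟩ ≫ cp S hproj G X = 0 := by
    intro X
    rw [← Category.assoc, enat (hs1 S hproj X) (hs0 S hproj X) (dd X), Category.assoc,
      show Gm S G (hs1 S hproj X) (hs0 S hproj X) (dd X) ≫ cp S hproj G X = 0 from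
        cokernel.condition _, Limits.comp_zero]
  set γ : ∀ X : D, F'.obj X ⟶ FO S hproj G X := fun X =>
    (c' X).desc (CokernelCofork.ofπ
      (e.hom.app ⟨Projective.over X, hs0 S hproj X⟩ ≫ cp S hproj G X) (w2 X)) with hγ
  have hγfac : ∀ X : D, F'.map (Projective.π X) ≫ γ X
      = e.hom.app ⟨Projective.over X, hs0 S hproj X⟩ ≫ cp S hproj G X :=
    fun X => Cofork.IsColimit.π_desc (c' X)
  have w3 : ∀ X : D, Gd S hproj G X
      ≫ e.inv.app ⟨Projective.over X, hs0 S hproj X⟩ ≫ F'.map (Projective.π X) = 0 := by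
    intro X
    rw [← Category.assoc, Gd, enat' (hs1 S hproj X) (hs0 S hproj X) (dd X), Category.assoc,
      ← F'.map_comp, dd_comp_π, map_zero_of_additive F' hadd', Limits.comp_zero]
  set β : ∀ X : D, FO S hproj G X ⟶ F'.obj X := fun X =>
    cokernel.desc _ (e.inv.app ⟨Projective.over X, hs0 S hproj X⟩ ≫ F'.map (Projective.π X))
      (w3 X) with hβ
  have hβfac : ∀ X : D, cp S hproj G X ≫ β X
      = e.inv.app ⟨Projective.over X, hs0 S hproj X⟩ ≫ F'.map (Projective.π X) :=
    fun X => cokernel.π_desc _ _ _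
  refine ⟨NatIso.ofComponents (fun X => ⟨γ X, β X, ?_, ?_⟩) ?_⟩
  · haveI : Epi ((ShortComplex.mk (F'.map (dd X)) (F'.map (Projective.π X)) (w' X)).g) :=
      hepi X
    show (γ X ≫ β X : F'.obj X ⟶ F'.obj X) = 𝟙 (F'.obj X)
    rw [← cancel_epi (F'.map (Projective.π X)), ← Category.assoc, hγfac X, Category.assoc,
      hβfac X, ← Category.assoc, Iso.hom_inv_id_app]
    simp
  · show (β X ≫ γ X : FO S hproj G X ⟶ FO S hproj G X) = 𝟙 (FO S hproj G X)
    rw [← cancel_epi (cp S hproj G X), ← Category.assoc, hβfac X, Category.assoc, hγfac X,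
      ← Category.assoc, Iso.inv_hom_id_app]
    rw [Category.id_comp]
    exact (Category.comp_id _).symm
  · intro X Y f
    haveI : Epi ((ShortComplex.mk (F'.map (dd X)) (F'.map (Projective.π X)) (w' X)).g) :=
      hepi X
    show F'.map f ≫ γ Y = γ X ≫ FM S hproj G f
    rw [← cancel_epi (F'.map (Projective.π X)), ← Category.assoc, ← F'.map_comp,
      ← l0_comm f, F'.map_comp, Category.assoc, hγfac Y, ← Category.assoc,
      enat (hs0 S hproj X) (hs0 S hproj Y) (l0 f), Category.assoc, ← Category.assoc,
      ← Category.assoc, hγfac X, Category.assoc, Category.assoc,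
      cp_FM S hproj G hGadd f (l0 f) (l0_comm f)]

end
end Stmt8Aux

/-- Let `D` and `C` be `ℂ`-linear abelian categories with `D` having enough projectives,
let `S` determine an additive full subcategory `D~ ⊆ D` containing all projective objects
of `D`, and let `G : D~ ⥤ C` be a `ℂ`-linear additive functor such that for every object
`X` of `D~` there is a right exact sequence `Q_X → P_X → X → 0` with `Q_X, P_X` projective
in `D` for which `(G X, G p_X)` is a cokernel of `G q_X` in `C`.  Then there is a right
exact `ℂ`-linear functor `F : D ⥤ C` with `F|_{D~} ≅ G`, and `F` is unique up to natural
isomorphism among right exact `ℂ`-linear functors with this property. -/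
theorem stmt8 {D : Type u₁} [Category.{v₁} D] [Abelian D] [Linear ℂ D]
    {C : Type u₂} [Category.{v₂} C] [Abelian C] [Linear ℂ C]
    [EnoughProjectives D]
    (S : D → Prop)
    (hzero : ∀ X : D, Limits.IsZero X → S X)
    (hsum : ∀ X Y : D, S X → S Y → S (X ⊞ Y))
    (hproj : ∀ X : D, Projective X → S X)
    (G : ObjectProperty.FullSubcategory S ⥤ C)
    (hGadd : IsAdditiveFunctor G) (hGlin : IsCLinearFunctor G)
    (hG : ∀ X : ObjectProperty.FullSubcategory S, ∃ (Q P : D) (hQ : Projective Q) (hP : Projective P)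
      (q : Q ⟶ P) (p : P ⟶ X.obj),
        RightExactSeq q p ∧
        ∃ w : G.map (show (⟨Q, hproj Q hQ⟩ : ObjectProperty.FullSubcategory S) ⟶ ⟨P, hproj P hP⟩ from ObjectProperty.homMk q) ≫
              G.map (show (⟨P, hproj P hP⟩ : ObjectProperty.FullSubcategory S) ⟶ X from ObjectProperty.homMk p) = 0,
          Nonempty (IsColimit (CokernelCofork.ofπ
            (G.map (show (⟨P, hproj P hP⟩ : ObjectProperty.FullSubcategory S) ⟶ X from ObjectProperty.homMk p)) w))) :
    ∃ F : D ⥤ C, IsAdditiveFunctor F ∧ IsCLinearFunctor F ∧ IsRightExactFunctor F ∧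
      Nonempty (ObjectProperty.ι S ⋙ F ≅ G) ∧
      ∀ F' : D ⥤ C, IsAdditiveFunctor F' → IsCLinearFunctor F' → IsRightExactFunctor F' →
        Nonempty (ObjectProperty.ι S ⋙ F' ≅ G) → Nonempty (F' ≅ F) := by
  refine ⟨Stmt8Aux.Fdef S hproj G hGadd, ?_, ?_, ?_, ?_, ?_⟩
  · intro X Y f g
    exact Stmt8Aux.FM_add S hproj G hGadd f g
  · intro X Y c f
    exact Stmt8Aux.FM_smul S hproj G hGadd hGlin c f
  · intro X Y Z q p h
    exact Stmt8Aux.FM_rexact S hproj G hGadd q p h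
  · refine ⟨NatIso.ofComponents (fun X => @asIso _ _ _ _
      (Stmt8Aux.phi S hproj G hGadd X)
      (Stmt8Aux.phi_isIso S hproj G hGadd X (hG X))) ?_⟩
    intro X Y f
    show Stmt8Aux.FM S hproj G f.hom ≫ Stmt8Aux.phi S hproj G hGadd Y
      = Stmt8Aux.phi S hproj G hGadd X ≫ G.map f
    exact Stmt8Aux.phi_natural S hproj G hGadd f
  · rintro F' hadd' hlin' hrex' ⟨e⟩
    exact Stmt8Aux.uniq_iso S hproj G hGadd F' hadd' hrex' e
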